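/- Define h(u) = E[X σ(X)] where X is a centered Gaussian random variable with standard deviation u, i.e. h(u) = u·E_{X'∼N(0,1)}[X' σ(uX')]. Then h is strictly increasing on (0, ∞). -/

import Mathlib

open MeasureTheory ProbabilityTheory

/-- The sigmoid (logistic) function `σ(z) = 1 / (1 + e^{-z})`. -/
noncomputable def sigmoid (z : ℝ) : ℝ := 1 / (1 + Real.exp (-z))

lemma sigmoid_pos (z : ℝ) : 0 < sigmoid z := by
  unfold sigmoid; positivity

lemma sigmoid_lt_one (z : ℝ) : sigmoid z < 1 := by
  unfold sigmoid
  rw [div_lt_one (by positivity)]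
  linarith [Real.exp_pos (-z)]

lemma sigmoid_strictMono : StrictMono sigmoid := by
  intro a b hab
  unfold sigmoid
  have h1 : 1 + Real.exp (-b) < 1 + Real.exp (-a) := by
    have := Real.exp_lt_exp.2 (neg_lt_neg hab)
    linarith
  exact div_lt_div_of_pos_left one_pos (by positivity) h1

lemma sigmoid_continuous : Continuous sigmoid := by
  apply Continuous.div continuous_const
  · fun_prop
  · intro x; positivity

lemma sigmoid_zero : sigmoid 0 = 1 / 2 := by
  simp [sigmoid, Real.exp_zero]
  norm_num

/-- `x ↦ x` is integrable wrt the standard Gaussian. -/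
lemma integrable_id_gaussian : Integrable (fun x : ℝ => x) (gaussianReal 0 1) := by
  rw [gaussianReal_of_var_ne_zero 0 one_ne_zero,
      integrable_withDensity_iff (measurable_gaussianPDF 0 1)
        (Filter.Eventually.of_forall fun x => ENNReal.ofReal_lt_top)]
  have h : ∀ x : ℝ, ((gaussianPDF 0 1 x).toReal : ℝ)
      = (Real.sqrt (2 * Real.pi))⁻¹ * Real.exp (-(1/2) * x ^ 2) := by
    intro x
    rw [gaussianPDF, ENNReal.toReal_ofReal (gaussianPDFReal_nonneg 0 1 x), gaussianPDFReal]
    norm_num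
    left; ring
  simp only [h]
  have := (integrable_mul_exp_neg_mul_sq (by norm_num : (0:ℝ) < 1/2)).const_mul
    ((Real.sqrt (2 * Real.pi))⁻¹)
  convert this using 1
  · rfl
  funext x; ring

lemma integrable_mul_bounded_gaussian {f : ℝ → ℝ} (hf : Continuous f)
    (hbd : ∀ x, |f x| ≤ 1) : Integrable (fun x : ℝ => x * f x) (gaussianReal 0 1) := by
  apply integrable_id_gaussian.mono
  · exact (continuous_id.mul hf).aestronglyMeasurable
  · refine Filter.Eventually.of_forall fun x => ?_
    simp only [Real.norm_eq_abs, abs_mul]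
    calc |x| * |f x| ≤ |x| * 1 := mul_le_mul_of_nonneg_left (hbd x) (abs_nonneg x)
    _ = |x| := mul_one _

lemma integrable_x_sigmoid (u : ℝ) :
    Integrable (fun x : ℝ => x * sigmoid (u * x)) (gaussianReal 0 1) := by
  have hc : Continuous (fun x : ℝ => sigmoid (u * x)) := by
    have heq : (fun x : ℝ => sigmoid (u * x)) = sigmoid ∘ (fun x : ℝ => u * x) := rfl
    rw [heq]
    exact sigmoid_continuous.comp (by fun_prop)
  apply integrable_mul_bounded_gaussian hc
  intro x
  rw [abs_le]
  constructor
  · linarith [sigmoid_pos (u * x)]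
  · linarith [sigmoid_lt_one (u * x)]

/-- The standard Gaussian assigns measure zero to `{0}`. -/
lemma gaussian_singleton_zero : (gaussianReal 0 1) {0} = 0 :=
  gaussianReal_absolutelyContinuous 0 one_ne_zero (by simp)

lemma key_mono {u v : ℝ} (huv : u < v) :
    (∫ x, x * sigmoid (u * x) ∂(gaussianReal 0 1))
      < ∫ x, x * sigmoid (v * x) ∂(gaussianReal 0 1) := by
  set γ := gaussianReal 0 1
  have hle : ∀ x : ℝ, x * sigmoid (u * x) ≤ x * sigmoid (v * x) := by
    intro x
    rcases lt_trichotomy x 0 with hx | hx | hx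
    · have : v * x < u * x := by nlinarith
      have := sigmoid_strictMono this
      nlinarith
    · simp [hx]
    · have : u * x < v * x := by nlinarith
      have := sigmoid_strictMono this
      nlinarith
  have hlt : ∀ x : ℝ, x ≠ 0 → x * sigmoid (u * x) < x * sigmoid (v * x) := by
    intro x hx
    rcases lt_trichotomy x 0 with h | h | h
    · have h1 : v * x < u * x := by nlinarith
      have := sigmoid_strictMono h1
      nlinarith
    · exact absurd h hx
    · have h1 : u * x < v * x := by nlinarith
      have := sigmoid_strictMono h1
      nlinarith
  have hint : Integrable (fun x => x * sigmoid (v * x) - x * sigmoid (u * x)) γ :=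
    (integrable_x_sigmoid v).sub (integrable_x_sigmoid u)
  have hpos : 0 < ∫ x, (x * sigmoid (v * x) - x * sigmoid (u * x)) ∂γ := by
    rw [integral_pos_iff_support_of_nonneg (fun x => sub_nonneg.2 (hle x)) hint]
    have hsub : {x : ℝ | x ≠ 0} ⊆ Function.support
        (fun x => x * sigmoid (v * x) - x * sigmoid (u * x)) := by
      intro x hx
      exact sub_ne_zero.2 (hlt x hx).ne'
    have h1 : (1 : ENNReal) ≤ γ (Function.support
        (fun x => x * sigmoid (v * x) - x * sigmoid (u * x))) := by
      calc (1 : ENNReal) = γ Set.univ := (measure_univ).symm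
      _ = γ ({0}ᶜ) := by
          refine (measure_eq_measure_of_null_diff (Set.subset_univ _) ?_).symm
          simpa using gaussian_singleton_zero
      _ ≤ _ := by
          apply measure_mono
          intro x hx
          exact hsub hx
    exact lt_of_lt_of_le (by norm_num) h1
  have := integral_sub (integrable_x_sigmoid v) (integrable_x_sigmoid u)
  rw [this] at hpos
  linarith

lemma integral_x_sigmoid_pos {u : ℝ} (hu : 0 < u) :
    0 < ∫ x, x * sigmoid (u * x) ∂(gaussianReal 0 1) := by
  have h0 : ∫ x, x * sigmoid ((0:ℝ) * x) ∂(gaussianReal 0 1) = 0 := by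
    have hmap : (gaussianReal 0 1).map (fun x : ℝ => -x) = gaussianReal 0 1 := by
      have := gaussianReal_map_const_mul (μ := 0) (v := 1) (-1)
      simp only [neg_one_mul, mul_zero] at this
      rw [this]
      congr 1
      ext
      norm_num
    have hmeas : Measurable (fun x : ℝ => -x) := measurable_neg
    have hid : ∫ x, x ∂(gaussianReal 0 1) = 0 := by
      have h1 := integral_map (μ := gaussianReal 0 1) (φ := fun x : ℝ => -x)
        hmeas.aemeasurable (f := fun x : ℝ => x) measurable_id.aestronglyMeasurable
      rw [hmap, integral_neg] at h1
      linarith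
    simp only [zero_mul, sigmoid_zero]
    rw [integral_mul_const, hid, zero_mul]
  have := key_mono (u := 0) (v := u) hu
  rw [h0] at this
  exact this

/-- The function `h(u) = E[X σ(X)]` for `X ~ N(0, u²)`, i.e.
`h(u) = u·E_{X'∼N(0,1)}[X' σ(uX')]`, is strictly increasing on `(0, ∞)`. -/
theorem gaussian_x_sigmoid_strictMonoOn :
    StrictMonoOn (fun u : ℝ => u * ∫ x, x * sigmoid (u * x) ∂(gaussianReal 0 1))
      (Set.Ioi (0 : ℝ)) := by
  intro u hu v hv huv
  simp only [Set.mem_Ioi] at hu hv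
  have h1 : u * ∫ x, x * sigmoid (u * x) ∂(gaussianReal 0 1)
      < v * ∫ x, x * sigmoid (u * x) ∂(gaussianReal 0 1) :=
    mul_lt_mul_of_pos_right huv (integral_x_sigmoid_pos hu)
  have h2 : v * ∫ x, x * sigmoid (u * x) ∂(gaussianReal 0 1)
      < v * ∫ x, x * sigmoid (v * x) ∂(gaussianReal 0 1) :=
    mul_lt_mul_of_pos_left (key_mono huv) hv
  exact h1.trans h2
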